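/- Let X, Y be real Banach spaces, P : X → X a continuous linear projection (P ∘ P = P), and p > 0. Let R : ℝ × X → Y be continuous, p-periodic in its first argument, continuously Fréchet differentiable in its second argument with (t,u) ↦ D₂R(t,u) jointly continuous, and satisfying R(t,0) = 0 and D₂R(t,0) = 0 for all t ∈ ℝ. Let χ : [0,∞) → [0,1] be a C^∞ function with χ(y) = 1 for y ∈ [0,1], χ(y) = 0 for y ≥ 2, and |χ'(y)| ≤ 2 for all y ≥ 0. For ρ > 0 define R_ρ(t,u) := χ(‖P u‖/ρ) · χ(‖u − P u‖/ρ) · R(t,u). Then for every ε > 0 there exists ρ₀ > 0 such that for every ρ ∈ (0, ρ₀] and every t ∈ ℝ, the map u ↦ R_ρ(t,u) is globally Lipschitz on X with Lipschitz constant at most ε. -/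

import Mathlib

/-- A bump profile with derivative bounded by 2 on `[0,∞)` is 2-Lipschitz there. -/
lemma chi_lip_aux (χ : ℝ → ℝ) (hχsmooth : ContDiff ℝ (⊤ : ℕ∞) χ)
    (hχderiv : ∀ y : ℝ, 0 ≤ y → |deriv χ y| ≤ 2) :
    ∀ a b : ℝ, 0 ≤ a → 0 ≤ b → |χ a - χ b| ≤ 2 * |a - b| := by
  intro a b ha hb
  have h := Convex.norm_image_sub_le_of_norm_hasDerivWithin_le
    (f := χ) (f' := deriv χ) (C := 2) (s := Set.Ici (0:ℝ))
    (fun x _ => ((hχsmooth.differentiable (by simp) x).hasDerivAt).hasDerivWithinAt)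
    (fun x hx => by simpa [Real.norm_eq_abs] using hχderiv x hx)
    (convex_Ici 0) hb ha
  simpa [Real.norm_eq_abs] using h

/-- Cut-off of the nonlinearity: if `R(t,u)` is continuous, `p`-periodic in `t`,
continuously Fréchet differentiable in `u` with `R(t,0) = 0` and `D₂R(t,0) = 0`, and
`χ` is a smooth bump profile, then the doubly cut-off nonlinearity
`R_ρ(t,u) = χ(‖Pu‖/ρ) χ(‖u − Pu‖/ρ) R(t,u)` is globally Lipschitz in `u`, with
Lipschitz constant at most `ε` once `ρ` is small enough (uniformly in `t`). -/
theorem cutoff_lipschitz {X Y : Type*}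
    [NormedAddCommGroup X] [NormedSpace ℝ X] [CompleteSpace X]
    [NormedAddCommGroup Y] [NormedSpace ℝ Y] [CompleteSpace Y]
    (P : X →L[ℝ] X) (hP : ∀ x : X, P (P x) = P x) (p : ℝ) (hp : 0 < p)
    (R : ℝ → X → Y)
    (hRcont : Continuous fun q : ℝ × X => R q.1 q.2)
    (hRper : ∀ t : ℝ, ∀ u : X, R (t + p) u = R t u)
    (D : ℝ → X → (X →L[ℝ] Y))
    (hD : ∀ t : ℝ, ∀ u : X, HasFDerivAt (R t) (D t u) u)
    (hDcont : Continuous fun q : ℝ × X => D q.1 q.2)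
    (hR0 : ∀ t : ℝ, R t 0 = 0)
    (hD0 : ∀ t : ℝ, D t 0 = 0)
    (χ : ℝ → ℝ) (hχsmooth : ContDiff ℝ (⊤ : ℕ∞) χ)
    (hχrange : ∀ y : ℝ, 0 ≤ y → χ y ∈ Set.Icc (0 : ℝ) 1)
    (hχone : ∀ y : ℝ, y ∈ Set.Icc (0 : ℝ) 1 → χ y = 1)
    (hχzero : ∀ y : ℝ, 2 ≤ y → χ y = 0)
    (hχderiv : ∀ y : ℝ, 0 ≤ y → |deriv χ y| ≤ 2) :
    ∀ ε : ℝ, 0 < ε → ∃ ρ₀ : ℝ, 0 < ρ₀ ∧ ∀ ρ : ℝ, 0 < ρ → ρ ≤ ρ₀ → ∀ t : ℝ, ∀ u v : X,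
      ‖(χ (‖P u‖ / ρ) * χ (‖u - P u‖ / ρ)) • R t u
        - (χ (‖P v‖ / ρ) * χ (‖v - P v‖ / ρ)) • R t v‖ ≤ ε * ‖u - v‖ := by
  intro ε hε
  -- periodicity of the derivative
  have hDper : ∀ t : ℝ, ∀ u : X, D (t + p) u = D t u := by
    intro t u
    have hfun : R (t + p) = R t := funext (hRper t)
    have h1 : HasFDerivAt (R t) (D (t + p) u) u := by
      have := hD (t + p) u
      rwa [hfun] at this
    exact h1.unique (hD t u)
  -- χ is bounded by 1 on nonneg arguments
  have hχabs : ∀ y : ℝ, 0 ≤ y → |χ y| ≤ 1 := by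
    intro y hy
    rcases hχrange y hy with ⟨h1, h2⟩
    rw [abs_le]; constructor <;> linarith
  set M : ℝ := 1 + 2 * ‖P‖ with hMdef
  have hM1 : (1 : ℝ) ≤ M := by rw [hMdef]; linarith [norm_nonneg P]
  set δ : ℝ := ε / (1 + 8 * M) with hδdef
  have hδpos : 0 < δ := div_pos hε (by linarith)
  have hδε : δ * (1 + 8 * M) = ε := by
    rw [hδdef]; exact div_mul_cancel₀ ε (by linarith : (0:ℝ) < 1 + 8 * M).ne'
  -- smallness of the derivative near the zero section, uniformly in t
  obtain ⟨r, hrpos, hrD⟩ :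
      ∃ r > 0, ∀ t : ℝ, ∀ u : X, ‖u‖ ≤ r → ‖D t u‖ ≤ δ := by
    have hf : Continuous fun q : ℝ × X => ‖D q.1 q.2‖ := hDcont.norm
    have hK : IsCompact ((Set.Icc (0:ℝ) p) ×ˢ ({0} : Set X)) :=
      isCompact_Icc.prod isCompact_singleton
    have hU : IsOpen ((fun q : ℝ × X => ‖D q.1 q.2‖) ⁻¹' Set.Iio δ) :=
      isOpen_Iio.preimage hf
    have hKU : (Set.Icc (0:ℝ) p) ×ˢ ({0} : Set X) ⊆
        (fun q : ℝ × X => ‖D q.1 q.2‖) ⁻¹' Set.Iio δ := by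
      rintro ⟨t, u⟩ ⟨-, hu⟩
      simp only [Set.mem_singleton_iff] at hu
      subst hu
      simp [Set.mem_preimage, hD0 t, hδpos]
    obtain ⟨r, hr, hsub⟩ := hK.exists_thickening_subset_open hU hKU
    refine ⟨r / 2, by positivity, ?_⟩
    intro t u hu
    have hper : Function.Periodic (fun s : ℝ => ‖D s u‖) p := fun s => by
      simp [hDper]
    obtain ⟨s, hs, hts⟩ := hper.exists_mem_Ico₀ hp t
    have hmem : ((s, u) : ℝ × X) ∈ Metric.thickening r
        ((Set.Icc (0:ℝ) p) ×ˢ ({0} : Set X)) := by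
      rw [Metric.mem_thickening_iff]
      refine ⟨(s, 0), ⟨⟨hs.1, hs.2.le⟩, rfl⟩, ?_⟩
      rw [Prod.dist_eq]
      apply max_lt
      · simpa using hr
      · rw [dist_eq_norm, sub_zero]; linarith
    have := hsub hmem
    simp only [Set.mem_preimage, Set.mem_Iio] at this
    calc ‖D t u‖ = ‖D s u‖ := hts
      _ ≤ δ := this.le
  refine ⟨r / 4, by positivity, ?_⟩
  intro ρ hρ hρr t u v
  have hρne : ρ ≠ 0 := ne_of_gt hρ
  have h4ρ : 4 * ρ ≤ r := by linarith
  -- nonnegativity of the χ arguments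
  have hargnn : ∀ w : X, (0:ℝ) ≤ ‖P w‖ / ρ ∧ (0:ℝ) ≤ ‖w - P w‖ / ρ := by
    intro w
    constructor <;> positivity
  -- nonzero cut-off coefficient forces a small norm
  have hcoef_ne : ∀ w : X, χ (‖P w‖ / ρ) * χ (‖w - P w‖ / ρ) ≠ 0 → ‖w‖ ≤ 4 * ρ := by
    intro w hw
    have h1 : ‖P w‖ / ρ < 2 := by
      by_contra h
      push_neg at h
      exact hw (by rw [hχzero _ h, zero_mul])
    have h2 : ‖w - P w‖ / ρ < 2 := by
      by_contra h
      push_neg at h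
      exact hw (by rw [hχzero _ h, mul_zero])
    have h1' : ‖P w‖ < 2 * ρ := by
      have := (div_lt_iff₀ hρ).1 h1; linarith
    have h2' : ‖w - P w‖ < 2 * ρ := by
      have := (div_lt_iff₀ hρ).1 h2; linarith
    calc ‖w‖ = ‖P w + (w - P w)‖ := by rw [add_sub_cancel]
      _ ≤ ‖P w‖ + ‖w - P w‖ := norm_add_le _ _
      _ ≤ 4 * ρ := by linarith
  -- Lipschitz estimate for the cut-off coefficient
  have hchiLip := chi_lip_aux χ hχsmooth hχderiv
  have hcoefLip : ∀ w z : X,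
      |χ (‖P w‖ / ρ) * χ (‖w - P w‖ / ρ) - χ (‖P z‖ / ρ) * χ (‖z - P z‖ / ρ)|
        ≤ (2 * M / ρ) * ‖w - z‖ := by
    intro w z
    have e1 : |χ (‖P w‖ / ρ) - χ (‖P z‖ / ρ)| ≤ 2 * (‖P‖ * ‖w - z‖ / ρ) := by
      have h := hchiLip (‖P w‖ / ρ) (‖P z‖ / ρ) (hargnn w).1 (hargnn z).1
      have hd : |‖P w‖ / ρ - ‖P z‖ / ρ| ≤ ‖P‖ * ‖w - z‖ / ρ := by
        rw [div_sub_div_same, abs_div, abs_of_pos hρ]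
        have hnum : |‖P w‖ - ‖P z‖| ≤ ‖P‖ * ‖w - z‖ :=
          calc |‖P w‖ - ‖P z‖| ≤ ‖P w - P z‖ := abs_norm_sub_norm_le _ _
            _ = ‖P (w - z)‖ := by rw [map_sub]
            _ ≤ ‖P‖ * ‖w - z‖ := P.le_opNorm _
        gcongr
      linarith
    have e2 : |χ (‖w - P w‖ / ρ) - χ (‖z - P z‖ / ρ)|
        ≤ 2 * ((1 + ‖P‖) * ‖w - z‖ / ρ) := by
      have h := hchiLip (‖w - P w‖ / ρ) (‖z - P z‖ / ρ) (hargnn w).2 (hargnn z).2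
      have hd : |‖w - P w‖ / ρ - ‖z - P z‖ / ρ| ≤ (1 + ‖P‖) * ‖w - z‖ / ρ := by
        rw [div_sub_div_same, abs_div, abs_of_pos hρ]
        have hnum : |‖w - P w‖ - ‖z - P z‖| ≤ (1 + ‖P‖) * ‖w - z‖ :=
          calc |‖w - P w‖ - ‖z - P z‖| ≤ ‖(w - P w) - (z - P z)‖ := abs_norm_sub_norm_le _ _
            _ = ‖(w - z) - P (w - z)‖ := by rw [map_sub]; congr 1; abel
            _ ≤ ‖w - z‖ + ‖P (w - z)‖ := norm_sub_le _ _
            _ ≤ ‖w - z‖ + ‖P‖ * ‖w - z‖ := by linarith [P.le_opNorm (w - z)]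
            _ = (1 + ‖P‖) * ‖w - z‖ := by ring
        gcongr
      linarith
    have habs1 : |χ (‖w - P w‖ / ρ)| ≤ 1 := hχabs _ (hargnn w).2
    have habs2 : |χ (‖P z‖ / ρ)| ≤ 1 := hχabs _ (hargnn z).1
    have key : χ (‖P w‖ / ρ) * χ (‖w - P w‖ / ρ) - χ (‖P z‖ / ρ) * χ (‖z - P z‖ / ρ)
        = (χ (‖P w‖ / ρ) - χ (‖P z‖ / ρ)) * χ (‖w - P w‖ / ρ)
          + χ (‖P z‖ / ρ) * (χ (‖w - P w‖ / ρ) - χ (‖z - P z‖ / ρ)) := by ring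
    rw [key]
    calc |_ + _| ≤ |(χ (‖P w‖ / ρ) - χ (‖P z‖ / ρ)) * χ (‖w - P w‖ / ρ)|
          + |χ (‖P z‖ / ρ) * (χ (‖w - P w‖ / ρ) - χ (‖z - P z‖ / ρ))| := abs_add_le _ _
      _ = |χ (‖P w‖ / ρ) - χ (‖P z‖ / ρ)| * |χ (‖w - P w‖ / ρ)|
          + |χ (‖P z‖ / ρ)| * |χ (‖w - P w‖ / ρ) - χ (‖z - P z‖ / ρ)| := by
          rw [abs_mul, abs_mul]
      _ ≤ |χ (‖P w‖ / ρ) - χ (‖P z‖ / ρ)| * 1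
          + 1 * |χ (‖w - P w‖ / ρ) - χ (‖z - P z‖ / ρ)| :=
          add_le_add (mul_le_mul_of_nonneg_left habs1 (abs_nonneg _))
            (mul_le_mul_of_nonneg_right habs2 (abs_nonneg _))
      _ ≤ 2 * (‖P‖ * ‖w - z‖ / ρ) + 2 * ((1 + ‖P‖) * ‖w - z‖ / ρ) := by
          rw [mul_one, one_mul]; exact add_le_add e1 e2
      _ = (2 * M / ρ) * ‖w - z‖ := by rw [hMdef]; field_simp; ring
  -- mean value inequality on the ball of radius r
  have hMVT : ∀ s : ℝ, ∀ w z : X, ‖w‖ ≤ r → ‖z‖ ≤ r →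
      ‖R s w - R s z‖ ≤ δ * ‖w - z‖ := by
    intro s w z hw hz
    exact Convex.norm_image_sub_le_of_norm_hasFDerivWithin_le
      (f := R s) (f' := D s) (s := Metric.closedBall (0:X) r)
      (fun x _ => (hD s x).hasFDerivWithinAt)
      (fun x hx => hrD s x (by rwa [mem_closedBall_zero_iff] at hx))
      (convex_closedBall 0 r)
      (by rwa [mem_closedBall_zero_iff])
      (by rwa [mem_closedBall_zero_iff])
  -- the key one-sided estimate, assuming the second point is small
  suffices key : ∀ w z : X, ‖z‖ ≤ 4 * ρ →
      ‖(χ (‖P w‖ / ρ) * χ (‖w - P w‖ / ρ)) • R t w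
        - (χ (‖P z‖ / ρ) * χ (‖z - P z‖ / ρ)) • R t z‖ ≤ ε * ‖w - z‖ by
    by_cases hb : χ (‖P v‖ / ρ) * χ (‖v - P v‖ / ρ) = 0
    · by_cases ha : χ (‖P u‖ / ρ) * χ (‖u - P u‖ / ρ) = 0
      · rw [ha, hb]
        simp only [zero_smul, sub_zero, norm_zero]
        positivity
      · calc ‖(χ (‖P u‖ / ρ) * χ (‖u - P u‖ / ρ)) • R t u
              - (χ (‖P v‖ / ρ) * χ (‖v - P v‖ / ρ)) • R t v‖
            = ‖(χ (‖P v‖ / ρ) * χ (‖v - P v‖ / ρ)) • R t v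
              - (χ (‖P u‖ / ρ) * χ (‖u - P u‖ / ρ)) • R t u‖ := norm_sub_rev _ _
          _ ≤ ε * ‖v - u‖ := key v u (hcoef_ne u ha)
          _ = ε * ‖u - v‖ := by rw [norm_sub_rev]
    · exact key u v (hcoef_ne v hb)
  intro w z hz
  have hzr : ‖z‖ ≤ r := le_trans hz h4ρ
  have decomp : (χ (‖P w‖ / ρ) * χ (‖w - P w‖ / ρ)) • R t w
      - (χ (‖P z‖ / ρ) * χ (‖z - P z‖ / ρ)) • R t z
      = (χ (‖P w‖ / ρ) * χ (‖w - P w‖ / ρ)) • (R t w - R t z)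
        + ((χ (‖P w‖ / ρ) * χ (‖w - P w‖ / ρ))
          - (χ (‖P z‖ / ρ) * χ (‖z - P z‖ / ρ))) • R t z := by
    rw [smul_sub, sub_smul]; abel
  -- bound on ‖R t z‖
  have hRz : ‖R t z‖ ≤ δ * (4 * ρ) := by
    have := hMVT t z 0 hzr (by simpa using hrpos.le)
    rw [hR0, sub_zero, sub_zero] at this
    calc ‖R t z‖ ≤ δ * ‖z‖ := this
      _ ≤ δ * (4 * ρ) := by gcongr
  -- first term
  have term1 : |χ (‖P w‖ / ρ) * χ (‖w - P w‖ / ρ)| * ‖R t w - R t z‖ ≤ δ * ‖w - z‖ := by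
    by_cases ha : χ (‖P w‖ / ρ) * χ (‖w - P w‖ / ρ) = 0
    · rw [ha, abs_zero, zero_mul]; positivity
    · have hwr : ‖w‖ ≤ r := le_trans (hcoef_ne w ha) h4ρ
      have h1 : |χ (‖P w‖ / ρ) * χ (‖w - P w‖ / ρ)| ≤ 1 := by
        rw [abs_mul]
        calc |χ (‖P w‖ / ρ)| * |χ (‖w - P w‖ / ρ)| ≤ 1 * 1 :=
              mul_le_mul (hχabs _ (hargnn w).1) (hχabs _ (hargnn w).2)
                (abs_nonneg _) one_pos.le
          _ = 1 := one_mul 1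
      calc |χ (‖P w‖ / ρ) * χ (‖w - P w‖ / ρ)| * ‖R t w - R t z‖
          ≤ 1 * (δ * ‖w - z‖) :=
            mul_le_mul h1 (hMVT t w z hwr hzr) (norm_nonneg _) one_pos.le
        _ = δ * ‖w - z‖ := one_mul _
  -- second term
  have term2 : |χ (‖P w‖ / ρ) * χ (‖w - P w‖ / ρ)
      - χ (‖P z‖ / ρ) * χ (‖z - P z‖ / ρ)| * ‖R t z‖
      ≤ (8 * M * δ) * ‖w - z‖ := by
    calc |χ (‖P w‖ / ρ) * χ (‖w - P w‖ / ρ) - χ (‖P z‖ / ρ) * χ (‖z - P z‖ / ρ)| * ‖R t z‖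
        ≤ ((2 * M / ρ) * ‖w - z‖) * (δ * (4 * ρ)) :=
          mul_le_mul (hcoefLip w z) hRz (norm_nonneg _) (by positivity)
      _ = (8 * M * δ) * ‖w - z‖ := by field_simp; ring
  rw [decomp]
  calc ‖_ + _‖ ≤ ‖(χ (‖P w‖ / ρ) * χ (‖w - P w‖ / ρ)) • (R t w - R t z)‖
        + ‖((χ (‖P w‖ / ρ) * χ (‖w - P w‖ / ρ))
          - (χ (‖P z‖ / ρ) * χ (‖z - P z‖ / ρ))) • R t z‖ := norm_add_le _ _
    _ = |χ (‖P w‖ / ρ) * χ (‖w - P w‖ / ρ)| * ‖R t w - R t z‖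
        + |χ (‖P w‖ / ρ) * χ (‖w - P w‖ / ρ)
          - χ (‖P z‖ / ρ) * χ (‖z - P z‖ / ρ)| * ‖R t z‖ := by
        rw [norm_smul, norm_smul, Real.norm_eq_abs, Real.norm_eq_abs]
    _ ≤ δ * ‖w - z‖ + (8 * M * δ) * ‖w - z‖ := add_le_add term1 term2
    _ = (δ * (1 + 8 * M)) * ‖w - z‖ := by ring
    _ = ε * ‖w - z‖ := by rw [hδε]
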